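/- For all ξ ∈ [-π/2, π/2] and all γ ∈ [-1/2, 0]: cos ξ · (-2 + 2γ sin ξ + cos ξ + 2(1 - 1/√2)) ≤ 0. -/
import Mathlib

/-- Key trigonometric inequality in the barrier proof for `Ω = π/2`,
with `a_max = 1 - 1/√2`. -/
theorem stmt6 (ξ γ : ℝ) (hξ : ξ ∈ Set.Icc (-(Real.pi/2)) (Real.pi/2))
    (hγ : γ ∈ Set.Icc (-(1/2):ℝ) 0) :
    Real.cos ξ * (-2 + 2*γ*Real.sin ξ + Real.cos ξ + 2*(1 - 1/Real.sqrt 2)) ≤ 0 := by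
  obtain ⟨h1, h2⟩ := hξ
  obtain ⟨hg1, hg2⟩ := hγ
  have hc : 0 ≤ Real.cos ξ := Real.cos_nonneg_of_mem_Icc ⟨by linarith, h2⟩
  have hs2 : Real.sqrt 2 ^ 2 = 2 := Real.sq_sqrt (by norm_num)
  have hs2' : (1:ℝ) ≤ Real.sqrt 2 := by nlinarith [Real.sqrt_nonneg 2]
  have h2inv : 2 * (1 - 1/Real.sqrt 2) = 2 - Real.sqrt 2 := by
    field_simp
    nlinarith
  rw [h2inv]
  have hpyth := Real.sin_sq_add_cos_sq ξ
  have hsb := Real.neg_one_le_sin ξ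
  have hsb' := Real.sin_le_one ξ
  have key : 2*γ*Real.sin ξ + Real.cos ξ ≤ Real.sqrt 2 := by
    rcases le_or_gt 0 (Real.sin ξ) with hs | hs
    · nlinarith [mul_nonneg (neg_nonneg.2 hg2) hs]
    · have h3 : 0 ≤ Real.cos ξ - Real.sin ξ := by linarith
      have h4 : (Real.cos ξ - Real.sin ξ)^2 ≤ 2 := by
        nlinarith [sq_nonneg (Real.cos ξ + Real.sin ξ)]
      have h5 : Real.cos ξ - Real.sin ξ ≤ Real.sqrt 2 := by
        nlinarith [sq_nonneg (Real.cos ξ - Real.sin ξ - Real.sqrt 2)]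
      nlinarith [mul_nonneg (by linarith : (0:ℝ) ≤ 2*γ + 1) (le_of_lt (neg_pos.2 hs))]
  nlinarith [mul_nonneg hc (sub_nonneg.2 key)]
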